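/- Fix N ≥ 1 and u ≥ 1 with N ≥ u. For T_N = ⋃_{j=1}^{N} (j/(N+1), j/N), we have ∫_{T_N ∩ (0, 1/u)} dt/t ≥ ⌊N/u⌋ · log(1 + 1/N) > 1/u − 2/N. -/

import Mathlib

open MeasureTheory Real

theorem stmt_7 (N : ℕ) (hN : 1 ≤ N) (u : ℝ) (hu : 1 ≤ u) (hNu : u ≤ N) :
    (∫ t in {t : ℝ | ∃ j : ℕ, 1 ≤ j ∧ j ≤ N ∧
        (j : ℝ) / (N + 1) < t ∧ t < (j : ℝ) / N} ∩ Set.Ioo 0 (1 / u), 1 / t) ≥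
      (⌊(N : ℝ) / u⌋₊ : ℝ) * Real.log (1 + 1 / N) ∧
    (⌊(N : ℝ) / u⌋₊ : ℝ) * Real.log (1 + 1 / N) > 1 / u - 2 / N := by
  have hN1 : (1:ℝ) ≤ N := by exact_mod_cast hN
  have hN0 : (0:ℝ) < N := by linarith
  have hN1p : (0:ℝ) < (N:ℝ) + 1 := by linarith
  have hu0 : (0:ℝ) < u := by linarith
  set m := ⌊(N:ℝ)/u⌋₊ with hm
  have hmu : (m:ℝ) ≤ (N:ℝ)/u := Nat.floor_le (by positivity)
  have hm1 : 1 ≤ m := Nat.le_floor (by rw [Nat.cast_one, le_div_iff₀ hu0]; linarith)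
  have hmNR : (m:ℝ) ≤ N := le_trans hmu (by rw [div_le_iff₀ hu0]; nlinarith)
  have hmN : m ≤ N := by exact_mod_cast hmNR
  set B : ℕ → Set ℝ := fun j => Set.Ioo ((j:ℝ)/(N+1)) ((j:ℝ)/N) with hB
  set S : Set ℝ := {t : ℝ | ∃ j : ℕ, 1 ≤ j ∧ j ≤ N ∧
        (j : ℝ) / (N + 1) < t ∧ t < (j : ℝ) / N} ∩ Set.Ioo 0 (1 / u) with hSdef
  have hSmeas : MeasurableSet S := by
    have : S = (⋃ j ∈ Finset.Icc 1 N, B j) ∩ Set.Ioo 0 (1/u) := by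
      rw [hSdef]
      congr 1
      ext t
      simp only [Set.mem_setOf_eq, Set.mem_iUnion, Finset.mem_Icc, hB, Set.mem_Ioo]
      constructor
      · rintro ⟨j, h1, h2, h3, h4⟩; exact ⟨j, ⟨h1, h2⟩, h3, h4⟩
      · rintro ⟨j, ⟨h1, h2⟩, h3, h4⟩; exact ⟨j, h1, h2, h3, h4⟩
    rw [this]
    exact (MeasurableSet.biUnion (Finset.Icc 1 N).countable_toSet
      (fun j _ => measurableSet_Ioo)).inter measurableSet_Ioo
  have hsubIcc : S ⊆ Set.Icc (((N:ℝ)+1)⁻¹) 1 := by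
    rintro t ⟨⟨j, hj1, hjN, hjt, htj⟩, ht0, htu⟩
    have hj1R : (1:ℝ) ≤ j := by exact_mod_cast hj1
    have hjNR : (j:ℝ) ≤ N := by exact_mod_cast hjN
    constructor
    · have : (1:ℝ)/(N+1) ≤ (j:ℝ)/(N+1) := by gcongr
      rw [one_div] at this
      linarith
    · have : (j:ℝ)/N ≤ 1 := by rw [div_le_one hN0]; exact hjNR
      linarith
  have hIcc : IntegrableOn (fun t : ℝ => 1/t) (Set.Icc (((N:ℝ)+1)⁻¹) 1) := by
    apply ContinuousOn.integrableOn_Icc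
    apply ContinuousOn.div continuousOn_const continuousOn_id
    intro x hx
    have : (0:ℝ) < ((N:ℝ)+1)⁻¹ := by positivity
    simp only [id]
    exact ne_of_gt (lt_of_lt_of_le this hx.1)
  have hInt : IntegrableOn (fun t : ℝ => 1/t) S := hIcc.mono_set hsubIcc
  -- each block integral
  have hblock : ∀ j : ℕ, 1 ≤ j → j ≤ N →
      ∫ t in B j, 1/t = Real.log (1 + 1/N) := by
    intro j hj1 hjN
    have hj0 : (0:ℝ) < j := by exact_mod_cast hj1
    have ha : (0:ℝ) < (j:ℝ)/(N+1) := by positivity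
    have hab : (j:ℝ)/(N+1) < (j:ℝ)/N := by
      apply div_lt_div_of_pos_left hj0 hN0
      linarith
    rw [hB]
    rw [← integral_Ioc_eq_integral_Ioo, ← intervalIntegral.integral_of_le hab.le]
    rw [integral_one_div]
    · congr 1
      field_simp
    · intro h
      rw [Set.uIcc_of_le hab.le, Set.mem_Icc] at h
      linarith [h.1]
  -- pairwise disjoint
  have hpair : Set.Pairwise ↑(Finset.Icc 1 m) (Function.onFun Disjoint B) := by
    have key : ∀ a b : ℕ, a < b → b ≤ N → Disjoint (B a) (B b) := by
      intro a b hab hbN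
      have habR : (a:ℝ) + 1 ≤ b := by exact_mod_cast hab
      have hbNR : (b:ℝ) ≤ N := by exact_mod_cast hbN
      have ha0 : (0:ℝ) ≤ a := Nat.cast_nonneg a
      have hle : (a:ℝ)/N ≤ (b:ℝ)/(N+1) := by
        rw [div_le_div_iff₀ hN0 hN1p]
        nlinarith
      rw [hB, Set.disjoint_left]
      rintro t ⟨_, h2⟩ ⟨h3, _⟩
      linarith
    intro i hi j hjm hij
    simp only [Finset.coe_Icc, Set.mem_Icc] at hi hjm
    rcases hij.lt_or_gt with h | h
    · exact key i j h (le_trans hjm.2 hmN)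
    · exact (key j i h (le_trans hi.2 hmN)).symm
  have hS' : S ⊇ ⋃ j ∈ Finset.Icc 1 m, B j := by
    intro t ht
    simp only [Set.mem_iUnion, Finset.mem_Icc, hB, Set.mem_Ioo] at ht
    obtain ⟨j, ⟨hj1, hjm⟩, h3, h4⟩ := ht
    have hj1R : (1:ℝ) ≤ j := by exact_mod_cast hj1
    have hjmR : (j:ℝ) ≤ m := by exact_mod_cast hjm
    have ht0 : 0 < t := lt_of_le_of_lt (by positivity) h3
    have htu : t < 1/u := by
      have h5 : (j:ℝ)/N ≤ (m:ℝ)/N := by gcongr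
      have h6 : (m:ℝ)/N ≤ 1/u := by
        rw [div_le_div_iff₀ hN0 hu0]
        have := (le_div_iff₀ hu0).mp hmu
        linarith
      linarith
    exact ⟨⟨j, hj1, le_trans hjm hmN, h3, h4⟩, ht0, htu⟩
  have hcalc : ∫ t in ⋃ j ∈ Finset.Icc 1 m, B j, 1/t = (m:ℝ) * Real.log (1 + 1/N) := by
    rw [integral_biUnion_finset _ (fun j _ => measurableSet_Ioo) hpair
      (fun j _ => hInt.mono_set (by
        intro t ht
        exact hS' (Set.mem_biUnion (by assumption) ht)))]
    have hc : ∀ j ∈ Finset.Icc 1 m, (∫ t in B j, 1/t) = Real.log (1 + 1/(N:ℝ)) := by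
      intro j hj
      rw [Finset.mem_Icc] at hj
      exact hblock j hj.1 (le_trans hj.2 hmN)
    rw [Finset.sum_congr rfl hc, Finset.sum_const, Nat.card_Icc]
    simp [nsmul_eq_mul]
  have hfirst : (∫ t in S, 1/t) ≥ (m:ℝ) * Real.log (1 + 1/N) := by
    rw [← hcalc]
    apply setIntegral_mono_set hInt
    · filter_upwards [ae_restrict_mem hSmeas] with t ht
      have : 0 < t := ht.2.1
      positivity
    · exact HasSubset.Subset.eventuallyLE hS'
  refine ⟨hfirst, ?_⟩
  -- second part
  have hlog : Real.log (1 + 1/(N:ℝ)) ≥ 1/((N:ℝ)+1) := by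
    have hx : (0:ℝ) < (1 + 1/(N:ℝ))⁻¹ := by positivity
    have h1 := Real.log_le_sub_one_of_pos hx
    rw [Real.log_inv] at h1
    have h2 : (1 + 1/(N:ℝ))⁻¹ = N/(N+1) := by
      rw [inv_eq_one_div]
      field_simp
    rw [h2] at h1
    have h3 : (N:ℝ)/(N+1) - 1 = -(1/(N+1)) := by field_simp; ring
    rw [h3] at h1
    linarith
  have hmgt : (N:ℝ)/u - 1 < m := Nat.sub_one_lt_floor _
  have hmugt : (N:ℝ) - u < (m:ℝ) * u := by
    have h := mul_lt_mul_of_pos_right hmgt hu0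
    rw [sub_mul, one_mul, div_mul_cancel₀ _ (ne_of_gt hu0)] at h
    linarith
  have h1 : (m:ℝ) * Real.log (1 + 1/N) ≥ (m:ℝ) * (1/((N:ℝ)+1)) := by
    apply mul_le_mul_of_nonneg_left hlog (Nat.cast_nonneg m)
  have h2 : 1/u - 2/(N:ℝ) < (m:ℝ) * (1/((N:ℝ)+1)) := by
    rw [mul_one_div]
    have heq : 1/u - 2/(N:ℝ) = ((N:ℝ) - 2*u)/(u*N) := by field_simp
    rw [heq, div_lt_div_iff₀ (by positivity) hN1p]
    have h3 : ((N:ℝ) - u) * N < (m:ℝ) * u * N :=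
      mul_lt_mul_of_pos_right hmugt hN0
    nlinarith [mul_nonneg hN0.le (by linarith : (0:ℝ) ≤ u - 1)]
  linarith
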